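/- In the free associative algebra K⟨x1,...,xd⟩ modulo the T-ideal generated by all cubes f^3 of elements f of the augmentation ideal, any monomial (word) in which some generator x_i occurs more than 4 times is zero. Consequently every nonzero word has length at most 3d. -/

import Mathlib

set_option linter.unusedSectionVars false

/-- The augmentation map of the free algebra, sending each generator to `0`. -/
noncomputable def augMap (K : Type*) [Field K] (d : ℕ) :
    FreeAlgebra K (Fin d) →ₐ[K] K :=
  FreeAlgebra.lift K (0 : Fin d → K)

/-- The relation whose closure under ring operations presents the quotient of
`K⟨x₁,…,x_d⟩` by the (T-)ideal generated by all cubes `f^3` of elements `f`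
of the augmentation ideal. -/
def cubeRel (K : Type*) [Field K] (d : ℕ) :
    FreeAlgebra K (Fin d) → FreeAlgebra K (Fin d) → Prop :=
  fun a b => ∃ f : FreeAlgebra K (Fin d), augMap K d f = 0 ∧ a = f ^ 3 ∧ b = 0

namespace Stmt11Aux

variable {K : Type*} [Field K] [Infinite K] {d : ℕ}

noncomputable def pr (K : Type*) [Field K] (d : ℕ) :
    FreeAlgebra K (Fin d) →ₐ[K] RingQuot (cubeRel K d) :=
  RingQuot.mkAlgHom K (cubeRel K d)

lemma cube_zero (f : FreeAlgebra K (Fin d)) (hf : augMap K d f = 0) :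
    (pr K d f) ^ 3 = 0 := by
  rw [pr, ← map_pow]
  exact (RingQuot.mkAlgHom_rel K ⟨f, hf, rfl, rfl⟩).trans (map_zero _)

lemma exists_scalar : ∃ c : K, c ≠ 0 ∧ c ≠ 1 := by
  classical
  obtain ⟨c, hc⟩ := Infinite.exists_notMem_finset ({0, 1} : Finset K)
  simp only [Finset.mem_insert, Finset.mem_singleton, not_or] at hc
  exact ⟨c, hc.1, hc.2⟩

lemma relA (f g : FreeAlgebra K (Fin d)) (hf : augMap K d f = 0)
    (hg : augMap K d g = 0) :
    pr K d f ^ 2 * pr K d g + pr K d f * pr K d g * pr K d f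
      + pr K d g * pr K d f ^ 2 = 0 := by
  obtain ⟨c, hc0, hc1⟩ := exists_scalar (K := K)
  set X := pr K d f
  set G := pr K d g
  have h3 : X ^ 3 = 0 := cube_zero f hf
  have hG3 : G ^ 3 = 0 := cube_zero g hg
  have e1 : (X + G) ^ 3 = 0 := by
    have := cube_zero (f + g) (by rw [map_add, hf, hg, add_zero])
    rwa [map_add] at this
  have e2 : (X + c • G) ^ 3 = 0 := by
    have := cube_zero (f + c • g) (by rw [map_add, map_smul, hf, hg, smul_zero, add_zero])
    rwa [map_add, map_smul] at this
  set A := X ^ 2 * G + X * G * X + G * X ^ 2 with hA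
  set B := X * G ^ 2 + G * X * G + G ^ 2 * X with hB
  have E1 : A + B = 0 := by
    rw [hA, hB]
    linear_combination (norm := noncomm_ring) e1 - h3 - hG3
  have expand : (X + c • G) ^ 3
      = X ^ 3 + c • A + (c * c) • B + (c * c * c) • G ^ 3 := by
    rw [hA, hB]; noncomm_ring; module
  have E2 : c • A + (c * c) • B = 0 := by
    have := expand.symm.trans e2
    rw [h3, hG3, smul_zero, zero_add, add_zero] at this
    exact this
  have hBA : B = -A := eq_neg_of_add_eq_zero_right E1
  have key : (c - c * c) • A = 0 := by
    calc (c - c * c) • A = c • A + (c * c) • (-A) := by module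
      _ = c • A + (c * c) • B := by rw [hBA]
      _ = 0 := E2
  have hcc : c - c * c ≠ 0 := by
    have : c - c * c = c * (1 - c) := by ring
    rw [this]
    exact mul_ne_zero hc0 (sub_ne_zero.mpr (fun h => hc1 h.symm))
  have : A = (c - c * c)⁻¹ • ((c - c * c) • A) := by
    rw [smul_smul, inv_mul_cancel₀ hcc, one_smul]
  rw [this, key, smul_zero]

/-- Images of augmentation-ideal elements. -/
def IsAug (x : RingQuot (cubeRel K d)) : Prop :=
  ∃ g : FreeAlgebra K (Fin d), augMap K d g = 0 ∧ pr K d g = x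

lemma IsAug.mul {x y : RingQuot (cubeRel K d)} (hx : IsAug x) (hy : IsAug y) :
    IsAug (x * y) := by
  obtain ⟨g, hg, rfl⟩ := hx
  obtain ⟨h, hh, rfl⟩ := hy
  exact ⟨g * h, by rw [map_mul, hg, zero_mul], by rw [map_mul]⟩

lemma aug_iota (i : Fin d) : augMap K d (FreeAlgebra.ι K i) = 0 := by
  simp [augMap]

lemma isAug_X (i : Fin d) : IsAug (pr K d (FreeAlgebra.ι K i)) :=
  ⟨FreeAlgebra.ι K i, aug_iota i, rfl⟩

section core
variable (i : Fin d)

lemma hX3 : (pr K d (FreeAlgebra.ι K i)) ^ 3 = 0 := cube_zero _ (aug_iota i)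

lemma R1 {a : RingQuot (cubeRel K d)} (ha : IsAug a) :
    pr K d (FreeAlgebra.ι K i) ^ 2 * a
      + pr K d (FreeAlgebra.ι K i) * a * pr K d (FreeAlgebra.ι K i)
      + a * pr K d (FreeAlgebra.ι K i) ^ 2 = 0 := by
  obtain ⟨g, hg, rfl⟩ := ha
  exact relA _ g (aug_iota i) hg

lemma L1 {a : RingQuot (cubeRel K d)} (ha : IsAug a) :
    pr K d (FreeAlgebra.ι K i) ^ 2 * a * pr K d (FreeAlgebra.ι K i) ^ 2 = 0 := by
  set X := pr K d (FreeAlgebra.ι K i)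
  linear_combination (norm := noncomm_ring)
    X * (R1 i ha) * X - (hX3 (K := K) i) * (a * X) - (X * a) * (hX3 (K := K) i)

lemma L2 {a : RingQuot (cubeRel K d)} (ha : IsAug a) :
    pr K d (FreeAlgebra.ι K i) ^ 2 * a * pr K d (FreeAlgebra.ι K i)
      + pr K d (FreeAlgebra.ι K i) * a * pr K d (FreeAlgebra.ι K i) ^ 2 = 0 := by
  set X := pr K d (FreeAlgebra.ι K i)
  linear_combination (norm := noncomm_ring) X * (R1 i ha) - (hX3 (K := K) i) * a

lemma H1 {a b : RingQuot (cubeRel K d)} (ha : IsAug a) (hb : IsAug b) :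
    pr K d (FreeAlgebra.ι K i) * a * pr K d (FreeAlgebra.ι K i) * b
      * pr K d (FreeAlgebra.ι K i) ^ 2 = 0 := by
  set X := pr K d (FreeAlgebra.ι K i)
  linear_combination (norm := noncomm_ring)
    (R1 i ha) * (b * X ^ 2) - L1 i (ha.mul hb) - a * (L1 i hb)

lemma H2 {a b : RingQuot (cubeRel K d)} (ha : IsAug a) (hb : IsAug b) :
    pr K d (FreeAlgebra.ι K i) ^ 2 * a * pr K d (FreeAlgebra.ι K i) * b
      * pr K d (FreeAlgebra.ι K i) = 0 := by
  set X := pr K d (FreeAlgebra.ι K i)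
  linear_combination (norm := noncomm_ring)
    (L2 i ha) * (b * X) - (X * a) * (L2 i hb) + H1 i ha hb

lemma H3 {a b : RingQuot (cubeRel K d)} (ha : IsAug a) (hb : IsAug b) :
    pr K d (FreeAlgebra.ι K i) * a * pr K d (FreeAlgebra.ι K i) ^ 2 * b
      * pr K d (FreeAlgebra.ι K i) = 0 := by
  set X := pr K d (FreeAlgebra.ι K i)
  linear_combination (norm := noncomm_ring)
    (X * a) * (L2 i hb) - H1 i ha hb

lemma core {a b c : RingQuot (cubeRel K d)}
    (ha : a = 1 ∨ IsAug a) (hb : b = 1 ∨ IsAug b) (hc : c = 1 ∨ IsAug c) :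
    pr K d (FreeAlgebra.ι K i) * a * pr K d (FreeAlgebra.ι K i) * b
      * pr K d (FreeAlgebra.ι K i) * c * pr K d (FreeAlgebra.ι K i) = 0 := by
  set X := pr K d (FreeAlgebra.ι K i)
  rcases ha with rfl | ha <;> rcases hb with rfl | hb <;> rcases hc with rfl | hc
  · linear_combination (norm := noncomm_ring) (hX3 (K := K) i) * X
  · linear_combination (norm := noncomm_ring) (hX3 (K := K) i) * (c * X)
  · linear_combination (norm := noncomm_ring) L1 i hb
  · linear_combination (norm := noncomm_ring) H2 i hb hc
  · linear_combination (norm := noncomm_ring) (X * a) * (hX3 (K := K) i)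
  · linear_combination (norm := noncomm_ring) H3 i ha hc
  · linear_combination (norm := noncomm_ring) H1 i ha hb
  · linear_combination (norm := noncomm_ring)
      (R1 i ha) * (b * X * c * X) - H2 i (ha.mul hb) hc - a * (H2 i hb hc)

end core

/-- Product of a word. -/
noncomputable def W (K : Type*) [Field K] {d : ℕ} (l : List (Fin d)) :
    RingQuot (cubeRel K d) :=
  (l.map fun j => pr K d (FreeAlgebra.ι K j)).prod

lemma W_cons (j : Fin d) (t : List (Fin d)) :
    W K (j :: t) = pr K d (FreeAlgebra.ι K j) * W K t := by
  simp [W]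

lemma isAug_W : ∀ l : List (Fin d), l ≠ [] → IsAug (W K l)
  | [], h => absurd rfl h
  | [j], _ => by simpa [W] using isAug_X j
  | j :: k :: t, _ => by
      rw [W_cons]
      exact (isAug_X j).mul (isAug_W (k :: t) (List.cons_ne_nil _ _))

lemma W_cases (l : List (Fin d)) : W K l = 1 ∨ IsAug (W K l) := by
  rcases eq_or_ne l [] with rfl | h
  · exact Or.inl rfl
  · exact Or.inr (isAug_W l h)

lemma W_append_cons (p : List (Fin d)) (i : Fin d) (t : List (Fin d)) :
    W K (p ++ i :: t) = W K p * (pr K d (FreeAlgebra.ι K i) * W K t) := by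
  simp [W]

lemma exists_split {α : Type*} [DecidableEq α] (a : α) :
    ∀ (k : ℕ) (l : List α), k + 1 ≤ l.count a →
      ∃ p t, l = p ++ a :: t ∧ k ≤ t.count a := by
  intro k l
  induction l with
  | nil => simp
  | cons x xs ih =>
      intro h
      by_cases hx : x = a
      · subst hx
        refine ⟨[], xs, rfl, ?_⟩
        rw [List.count_cons_self] at h
        omega
      · have h' : k + 1 ≤ xs.count a := by
          rwa [List.count_cons_of_ne hx] at h
        obtain ⟨p, t, rfl, ht⟩ := ih h'
        exact ⟨x :: p, t, rfl, ht⟩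

lemma word_zero (l : List (Fin d)) (i : Fin d) (h : 4 ≤ l.count i) :
    W K l = (0 : RingQuot (cubeRel K d)) := by
  obtain ⟨p, t1, rfl, h1⟩ := exists_split i 3 l h
  obtain ⟨q, t2, rfl, h2⟩ := exists_split i 2 t1 h1
  obtain ⟨r, t3, rfl, h3⟩ := exists_split i 1 t2 h2
  obtain ⟨s, t, rfl, -⟩ := exists_split i 0 t3 h3
  rw [W_append_cons, W_append_cons, W_append_cons, W_append_cons]
  set X := pr K d (FreeAlgebra.ι K i)
  have key : X * W K q * X * W K r * X * W K s * X = 0 :=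
    core i (W_cases q) (W_cases r) (W_cases s)
  have : X * (W K q * (X * (W K r * (X * (W K s * (X * W K t))))))
      = (X * W K q * X * W K r * X * W K s * X) * W K t := by noncomm_ring
  rw [this, key, zero_mul, mul_zero]

lemma count_ofFn {α : Type*} [DecidableEq α] :
    ∀ {n : ℕ} (w : Fin n → α) (i : α),
      (List.ofFn w).count i = (Finset.univ.filter fun j => w j = i).card := by
  intro n
  induction n with
  | zero => intro w i; simp
  | succ m ih =>
      intro w i
      rw [List.ofFn_succ, List.count_cons, ih (fun j => w j.succ) i,
        Finset.card_filter, Finset.card_filter, Fin.sum_univ_succ]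
      by_cases h : w 0 = i <;> simp [h, add_comm]

lemma length_eq_sum_count (l : List (Fin d)) :
    l.length = ∑ i : Fin d, l.count i := by
  induction l with
  | nil => simp
  | cons x t ih =>
      have h1 : (∑ i : Fin d, if (x == i) then 1 else 0) = 1 := by
        simp [beq_iff_eq]
      simp only [List.length_cons, List.count_cons, ih, Finset.sum_add_distrib, h1]

end Stmt11Aux

open Stmt11Aux in
/-- In `N = K⟨x₁,…,x_d⟩ / id{f³ : f without constant term}` (K an infinite
field), any word in which some generator occurs more than 4 times is zero;
consequently every nonzero word has length at most `3d`. -/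
theorem stmt_11 (K : Type*) [Field K] [Infinite K] (d : ℕ) :
    (∀ (n : ℕ) (w : Fin n → Fin d),
        (∃ i : Fin d, 4 < (Finset.univ.filter fun j => w j = i).card) →
        (List.ofFn fun j =>
            RingQuot.mkAlgHom K (cubeRel K d) (FreeAlgebra.ι K (w j))).prod
          = 0) ∧
      ∀ (n : ℕ) (w : Fin n → Fin d),
        (List.ofFn fun j =>
            RingQuot.mkAlgHom K (cubeRel K d) (FreeAlgebra.ι K (w j))).prod
          ≠ 0 → n ≤ 3 * d := by
  have hprod : ∀ (n : ℕ) (w : Fin n → Fin d),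
      (List.ofFn fun j =>
          RingQuot.mkAlgHom K (cubeRel K d) (FreeAlgebra.ι K (w j))).prod
        = W K (List.ofFn w) := by
    intro n w
    rw [W, List.map_ofFn]
    rfl
  constructor
  · intro n w ⟨i, hi⟩
    rw [hprod]
    refine word_zero _ i ?_
    rw [count_ofFn]
    omega
  · intro n w hne
    by_contra hn
    push_neg at hn
    apply hne
    rw [hprod]
    have hlen : (List.ofFn w).length = n := List.length_ofFn
    have hsum : (3 * d : ℕ) < ∑ i : Fin d, (List.ofFn w).count i := by
      rw [← length_eq_sum_count, hlen]; exact hn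
    have hex : ∃ i : Fin d, 3 < (List.ofFn w).count i := by
      by_contra hall
      push_neg at hall
      have : (∑ i : Fin d, (List.ofFn w).count i) ≤ ∑ _i : Fin d, 3 :=
        Finset.sum_le_sum fun i _ => hall i
      simp only [Finset.sum_const, Finset.card_univ, Fintype.card_fin, smul_eq_mul] at this
      omega
    obtain ⟨i, hi⟩ := hex
    exact word_zero _ i (by omega)
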